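/- Under the restricted eigenvalue condition with constant φ₀² and the event λ ≥ 2‖Xᵀδ‖_∞/n, the Lasso estimator γ̂ for the model y = Xγ* + δ satisfies the ℓ₁ error bound ‖γ̂ − γ*‖₁ ≤ 16 λ s₀ / φ₀², where s₀ = |supp(γ*)|. -/

import Mathlib

open Matrix

set_option maxHeartbeats 1000000 in
/-- Under the restricted eigenvalue condition and λ ≥ 2‖Xᵀδ‖_∞/n, the Lasso
estimator for y = Xγ* + δ satisfies ‖γ̂ − γ*‖₁ ≤ 16 λ s₀ / φ₀². -/
theorem stmt9 {n p : ℕ} (hn : 0 < n) (X : Matrix (Fin n) (Fin p) ℝ)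
    (γs : Fin p → ℝ) (S0 : Finset (Fin p)) (hS0 : S0 = Finset.univ.filter (fun j => γs j ≠ 0))
    (s0 : ℕ) (hs0 : S0.card = s0)
    (δ : Fin n → ℝ) (y : Fin n → ℝ) (hy : y = X.mulVec γs + δ)
    (φ0 : ℝ) (hφ0 : 0 < φ0)
    (hRE : ∀ Δ : Fin p → ℝ, (∑ j ∈ S0ᶜ, |Δ j|) ≤ 3 * ∑ j ∈ S0, |Δ j| →
      (∑ j ∈ S0, (Δ j) ^ 2) ≤ (1 / (n * φ0 ^ 2)) * ∑ i, (X.mulVec Δ i) ^ 2)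
    (lam : ℝ) (hlampos : 0 < lam)
    (hlam : ∀ j, 2 * |δ ⬝ᵥ fun i => X i j| / n ≤ lam)
    (γh : Fin p → ℝ)
    (hmin : ∀ γ : Fin p → ℝ,
      (1 / (2 * n)) * (∑ i, (y i - X.mulVec γh i) ^ 2) + lam * ∑ j, |γh j| ≤
      (1 / (2 * n)) * (∑ i, (y i - X.mulVec γ i) ^ 2) + lam * ∑ j, |γ j|) :
    ∑ j, |γh j - γs j| ≤ 16 * lam * s0 / φ0 ^ 2 := by
  have hn' : (0:ℝ) < n := by exact_mod_cast hn
  set Δ : Fin p → ℝ := fun j => γh j - γs j with hΔ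
  set a := ∑ j ∈ S0, |Δ j| with ha
  set b := ∑ j ∈ S0ᶜ, |Δ j| with hb
  set Q := ∑ i, (X.mulVec Δ i) ^ 2 with hQ
  set T := ∑ i, δ i * X.mulVec Δ i with hT
  have ha0 : 0 ≤ a := Finset.sum_nonneg fun _ _ => abs_nonneg _
  have hb0 : 0 ≤ b := Finset.sum_nonneg fun _ _ => abs_nonneg _
  have hQ0 : 0 ≤ Q := Finset.sum_nonneg fun _ _ => sq_nonneg _
  -- residual identity
  have hres : ∀ i, y i - X.mulVec γh i = δ i - X.mulVec Δ i := by
    intro i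
    have h1 : X.mulVec Δ i = X.mulVec γh i - X.mulVec γs i := by
      simp [hΔ, Matrix.mulVec, dotProduct, mul_sub, Finset.sum_sub_distrib]
    rw [hy, h1]; simp [Pi.add_apply]; ring
  have hEs : ∑ i, (y i - X.mulVec γs i) ^ 2 = ∑ i, (δ i) ^ 2 := by
    apply Finset.sum_congr rfl; intro i _; rw [hy]; simp [Pi.add_apply]
  have hexp : ∑ i, (y i - X.mulVec γh i) ^ 2 = (∑ i, (δ i) ^ 2) - 2 * T + Q := by
    rw [hT, hQ, Finset.mul_sum, ← Finset.sum_sub_distrib, ← Finset.sum_add_distrib]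
    apply Finset.sum_congr rfl; intro i _; rw [hres i]; ring
  -- swap the sum
  have hswap : T = ∑ j, (δ ⬝ᵥ fun i => X i j) * Δ j := by
    rw [hT]
    simp only [Matrix.mulVec, dotProduct, Finset.mul_sum, Finset.sum_mul]
    rw [Finset.sum_comm]
    exact Finset.sum_congr rfl fun j _ => Finset.sum_congr rfl fun i _ => by ring
  -- bound T
  have hsplit : ∀ f : Fin p → ℝ, ∑ j, f j = (∑ j ∈ S0, f j) + ∑ j ∈ S0ᶜ, f j := by
    intro f; rw [Finset.sum_add_sum_compl]
  have hTle : T ≤ lam * n / 2 * (a + b) := by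
    have hcol : ∀ j, |δ ⬝ᵥ fun i => X i j| ≤ lam * n / 2 := by
      intro j; have h := hlam j; rw [div_le_iff₀ hn'] at h; linarith
    calc T = ∑ j, (δ ⬝ᵥ fun i => X i j) * Δ j := hswap
      _ ≤ ∑ j, lam * n / 2 * |Δ j| := by
          apply Finset.sum_le_sum; intro j _
          calc (δ ⬝ᵥ fun i => X i j) * Δ j ≤ |(δ ⬝ᵥ fun i => X i j) * Δ j| := le_abs_self _
            _ = |δ ⬝ᵥ fun i => X i j| * |Δ j| := abs_mul _ _
            _ ≤ lam * n / 2 * |Δ j| := mul_le_mul_of_nonneg_right (hcol j) (abs_nonneg _)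
      _ = lam * n / 2 * (a + b) := by
          rw [← Finset.mul_sum, hsplit (fun j => |Δ j|), ha, hb]
  -- γs vanishes off S0
  have hγs0 : ∀ j ∈ S0ᶜ, γs j = 0 := by
    intro j hj; by_contra hne
    exact (Finset.mem_compl.mp hj) (by rw [hS0]; simp [hne])
  -- norm comparison
  have hnorm : (∑ j, |γs j|) - ∑ j, |γh j| ≤ a - b := by
    rw [hsplit (fun j => |γs j|), hsplit (fun j => |γh j|)]
    have e1 : ∑ j ∈ S0ᶜ, |γs j| = 0 :=
      Finset.sum_eq_zero fun j hj => by rw [hγs0 j hj, abs_zero]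
    have e2 : b = ∑ j ∈ S0ᶜ, |γh j| := by
      rw [hb]; apply Finset.sum_congr rfl; intro j hj
      rw [hΔ]; simp [hγs0 j hj]
    have e3 : (∑ j ∈ S0, |γs j|) - ∑ j ∈ S0, |γh j| ≤ a := by
      rw [ha, ← Finset.sum_sub_distrib]
      apply Finset.sum_le_sum; intro j _
      calc |γs j| - |γh j| ≤ |γs j - γh j| := abs_sub_abs_le_abs_sub _ _
        _ = |Δ j| := by rw [hΔ, abs_sub_comm]
    linarith
  -- basic inequality
  have hbasic := hmin γs
  rw [hEs, hexp] at hbasic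
  have h1 : 1 / (2 * (n:ℝ)) * (Q - 2 * T) ≤ lam * ((∑ j, |γs j|) - ∑ j, |γh j|) := by
    nlinarith [hbasic]
  have h2 : Q - 2 * T ≤ 2 * n * (lam * ((∑ j, |γs j|) - ∑ j, |γh j|)) := by
    have hmul := mul_le_mul_of_nonneg_left h1 (show (0:ℝ) ≤ 2 * n by positivity)
    have heq : 2 * (n:ℝ) * (1 / (2 * n) * (Q - 2 * T)) = Q - 2 * T := by
      field_simp
    linarith [heq ▸ hmul]
  -- KEY inequality: Q + n·λ·b ≤ 3·n·λ·a
  have hKEY : Q + n * lam * b ≤ 3 * (n * lam * a) := by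
    have h3 := mul_le_mul_of_nonneg_left hnorm
      (show (0:ℝ) ≤ 2 * n * lam by positivity)
    nlinarith [h2, hTle]
  have hba : b ≤ 3 * a := by
    nlinarith [hKEY, hQ0, mul_pos hn' hlampos]
  have hQle : Q ≤ 3 * (n * lam * a) := by
    nlinarith [hKEY, mul_nonneg (mul_nonneg hn'.le hlampos.le) hb0]
  -- restricted eigenvalue
  have hre := hRE Δ (by rw [← ha, ← hb]; exact hba)
  rw [← hQ] at hre
  -- Cauchy–Schwarz
  have hCS : a ^ 2 ≤ (s0:ℝ) * ∑ j ∈ S0, (Δ j) ^ 2 := by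
    have h := Finset.sum_mul_sq_le_sq_mul_sq S0 (fun _ => (1:ℝ)) (fun j => |Δ j|)
    simp only [one_mul, one_pow, sq_abs, Finset.sum_const, nsmul_eq_mul, mul_one] at h
    rw [ha]; rw [hs0] at h; exact h
  have hφ2 : (0:ℝ) < φ0 ^ 2 := by positivity
  have key2 : a ^ 2 * φ0 ^ 2 ≤ 3 * lam * s0 * a := by
    have h5 : a ^ 2 ≤ (s0:ℝ) * ((1 / (n * φ0 ^ 2)) * (3 * (n * lam * a))) := by
      calc a ^ 2 ≤ (s0:ℝ) * ∑ j ∈ S0, (Δ j) ^ 2 := hCS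
        _ ≤ (s0:ℝ) * ((1 / (n * φ0 ^ 2)) * Q) :=
            mul_le_mul_of_nonneg_left hre (Nat.cast_nonneg _)
        _ ≤ (s0:ℝ) * ((1 / (n * φ0 ^ 2)) * (3 * (n * lam * a))) := by
            apply mul_le_mul_of_nonneg_left _ (Nat.cast_nonneg _)
            exact mul_le_mul_of_nonneg_left hQle (by positivity)
    have heq : (s0:ℝ) * ((1 / (n * φ0 ^ 2)) * (3 * (n * lam * a))) = 3 * lam * s0 * a / φ0 ^ 2 := by
      field_simp
    rw [heq, le_div_iff₀ hφ2] at h5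
    exact h5
  clear_value Q T
  have htot : ∑ j, |γh j - γs j| = a + b := by
    show ∑ j, |Δ j| = a + b
    rw [hsplit (fun j => |Δ j|), ha, hb]
  rw [htot]
  clear_value Δ a b
  by_cases hA : a ≤ 0
  · have ha' : a = 0 := le_antisymm hA ha0
    have hb' : b = 0 := le_antisymm (by linarith) hb0
    rw [ha', hb']
    norm_num
    positivity
  · push_neg at hA
    rw [le_div_iff₀ hφ2]
    have haφ : a * φ0 ^ 2 ≤ 3 * lam * s0 := by
      have h6 : a * (a * φ0 ^ 2) ≤ a * (3 * lam * s0) := by nlinarith [key2]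
      exact le_of_mul_le_mul_left h6 hA
    have h7 : b * φ0 ^ 2 ≤ 3 * (a * φ0 ^ 2) :=
      by nlinarith [mul_le_mul_of_nonneg_right hba hφ2.le]
    have h8 : (0:ℝ) ≤ lam * s0 := mul_nonneg hlampos.le (Nat.cast_nonneg _)
    nlinarith [haφ, h7, h8]
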